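/- arXiv:2004.12967 — 2 statements merged into one kernel-verified Lean document; each statement's English description precedes it below -/
import Mathlib

section
/- Let H₁ ⊆ H₀ be Hilbert spaces with compact inclusion, and for each t in a metric space I let T_t : H₁ → K be bounded linear operators depending continuously on t (in operator norm), and suppose there exists c > 0 independent of t with c·‖u‖_{H₁} ≤ ‖T_t u‖_K + ‖u‖_{H₀} for all u ∈ H₁ and all t. Fix t₀ ∈ I and let N₀ = ker T_{t₀}. Then there exist ε > 0 and C > 0 such that for all t with dist(t, t₀) < ε, ‖u‖_{H₁} ≤ C·‖T_t u‖_K for every u ∈ H₁ orthogonal (in H₀) to N₀. -/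
open scoped InnerProductSpace

/-- Uniform coercive estimate for a continuous family of operators `T t` satisfying
a uniform subelliptic estimate with respect to a compact injective inclusion
`ι : H₁ → H₀`: for `t` close to `t₀`, `‖u‖₁ ≤ C‖T t u‖` holds uniformly for all `u`
orthogonal in `H₀` to `N₀ = ker (T t₀)`. -/
theorem stmt8 {H₀ H₁ K : Type*}
    [NormedAddCommGroup H₀] [InnerProductSpace ℂ H₀] [CompleteSpace H₀]
    [NormedAddCommGroup H₁] [InnerProductSpace ℂ H₁] [CompleteSpace H₁]
    [NormedAddCommGroup K] [InnerProductSpace ℂ K] [CompleteSpace K]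
    {I : Type*} [MetricSpace I]
    (ι : H₁ →L[ℂ] H₀) (hcomp : IsCompactOperator ι) (hinj : Function.Injective ι)
    (T : I → (H₁ →L[ℂ] K)) (hTcont : Continuous T)
    (c : ℝ) (hc : 0 < c)
    (hest : ∀ (t : I) (u : H₁), c * ‖u‖ ≤ ‖T t u‖ + ‖ι u‖)
    (t₀ : I) :
    ∃ ε > (0 : ℝ), ∃ C > (0 : ℝ), ∀ t : I, dist t t₀ < ε →
      ∀ u : H₁, (∀ w ∈ LinearMap.ker (T t₀ : H₁ →ₗ[ℂ] K), ⟪ι u, ι w⟫_ℂ = 0) →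
        ‖u‖ ≤ C * ‖T t u‖ := by
  by_contra hcon
  push_neg at hcon
  have H : ∀ n : ℕ, ∃ t, dist t t₀ < 1 / (n + 1) ∧ ∃ u : H₁,
      (∀ w ∈ LinearMap.ker (T t₀ : H₁ →ₗ[ℂ] K), ⟪ι u, ι w⟫_ℂ = 0) ∧ (n + 1 : ℝ) * ‖T t u‖ < ‖u‖ := by
    intro n
    obtain ⟨t, ht, u, horth, hu⟩ := hcon (1 / (n + 1)) (by positivity) (n + 1) (by positivity)
    exact ⟨t, ht, u, horth, hu⟩
  choose t ht u horth hu using H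
  have hupos : ∀ n, 0 < ‖u n‖ := fun n =>
    lt_of_le_of_lt (by positivity) (hu n)
  set v : ℕ → H₁ := fun n => (‖u n‖)⁻¹ • u n with hv
  have hv1 : ∀ n, ‖v n‖ = 1 := by
    intro n
    simp [hv, norm_smul, abs_of_pos (inv_pos.2 (hupos n)),
      inv_mul_cancel₀ (hupos n).ne']
  have hTv : ∀ n, ‖T (t n) (v n)‖ < 1 / (n + 1) := by
    intro n
    have h1 : ‖T (t n) (v n)‖ = (‖u n‖)⁻¹ * ‖T (t n) (u n)‖ := by
      simp [hv, norm_smul, abs_of_pos (inv_pos.2 (hupos n))]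
    rw [h1, inv_mul_lt_iff₀ (hupos n), mul_one_div, lt_div_iff₀ (by positivity : (0:ℝ) < (n:ℝ)+1)]
    nlinarith [hu n, norm_nonneg (T (t n) (u n))]
  have horthv : ∀ n, ∀ w ∈ LinearMap.ker (T t₀ : H₁ →ₗ[ℂ] K), ⟪ι (v n), ι w⟫_ℂ = 0 := by
    intro n w hw
    have h := horth n w hw
    show ⟪ι ((‖u n‖)⁻¹ • u n), ι w⟫_ℂ = 0
    rw [ι.map_smul_of_tower, ← Complex.coe_smul, inner_smul_left, h, mul_zero]
  -- compactness : extract subsequence with ι (v n) convergent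
  obtain ⟨S, hScomp, hSsub⟩ :=
    hcomp.image_closedBall_subset_compact (𝕜₁ := ℂ) (f := (ι : H₁ →ₗ[ℂ] H₀)) 1
  have hmem : ∀ n, ι (v n) ∈ S := by
    intro n
    exact hSsub ⟨v n, by simp [Metric.mem_closedBall, hv1 n], rfl⟩
  obtain ⟨x, -, φ, hφ, hx⟩ := hScomp.tendsto_subseq hmem
  -- t (φ n) → t₀
  have htend0 : Filter.Tendsto (fun n : ℕ => 1 / ((n:ℝ) + 1)) Filter.atTop (nhds 0) :=
    tendsto_one_div_add_atTop_nhds_zero_nat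
  have hφtend : Filter.Tendsto (fun n : ℕ => 1 / ((φ n : ℝ) + 1)) Filter.atTop (nhds 0) :=
    htend0.comp hφ.tendsto_atTop
  have httend : Filter.Tendsto (fun n => t (φ n)) Filter.atTop (nhds t₀) := by
    rw [Metric.tendsto_atTop]
    intro ε hε
    obtain ⟨N, hN⟩ := (Metric.tendsto_atTop.1 hφtend) ε hε
    refine ⟨N, fun n hn => ?_⟩
    have := hN n hn
    have h2 := ht (φ n)
    rw [Real.dist_eq] at this
    have : |1 / ((φ n : ℝ) + 1)| < ε := by simpa using this
    calc dist (t (φ n)) t₀ < 1 / ((φ n : ℝ) + 1) := h2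
      _ ≤ |1 / ((φ n : ℝ) + 1)| := le_abs_self _
      _ < ε := this
  -- T t₀ (v (φ n)) → 0
  have hTop : Filter.Tendsto (fun n => ‖T t₀ - T (t (φ n))‖) Filter.atTop (nhds 0) := by
    have h1 : Filter.Tendsto (fun n => T t₀ - T (t (φ n))) Filter.atTop (nhds 0) := by
      have := (hTcont.tendsto t₀).comp httend
      have := Filter.Tendsto.sub (tendsto_const_nhds (x := T t₀)) this
      simpa using this
    simpa using h1.norm
  have hT0 : Filter.Tendsto (fun n => ‖T t₀ (v (φ n))‖) Filter.atTop (nhds 0) := by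
    apply squeeze_zero (fun n => norm_nonneg _)
      (g := fun n => ‖T t₀ - T (t (φ n))‖ + 1 / ((φ n : ℝ) + 1))
    · intro n
      have h1 : ‖T t₀ (v (φ n))‖ ≤ ‖(T t₀ - T (t (φ n))) (v (φ n))‖ + ‖T (t (φ n)) (v (φ n))‖ := by
        have : T t₀ (v (φ n)) = (T t₀ - T (t (φ n))) (v (φ n)) + T (t (φ n)) (v (φ n)) := by
          simp
        rw [this]; exact norm_add_le _ _
      have h2 : ‖(T t₀ - T (t (φ n))) (v (φ n))‖ ≤ ‖T t₀ - T (t (φ n))‖ := by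
        calc ‖(T t₀ - T (t (φ n))) (v (φ n))‖ ≤ ‖T t₀ - T (t (φ n))‖ * ‖v (φ n)‖ :=
              ContinuousLinearMap.le_opNorm _ _
          _ = ‖T t₀ - T (t (φ n))‖ := by rw [hv1]; ring
      have h3 := (hTv (φ n)).le
      linarith
    · simpa using hTop.add hφtend
  -- Cauchy sequence
  have hcauchy : CauchySeq (fun n => v (φ n)) := by
    rw [Metric.cauchySeq_iff]
    intro ε hε
    obtain ⟨N₁, hN₁⟩ := (Metric.tendsto_atTop.1 hT0) (c * ε / 4) (by positivity)
    have hιc : CauchySeq (fun n => ι (v (φ n))) := hx.cauchySeq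
    obtain ⟨N₂, hN₂⟩ := (Metric.cauchySeq_iff.1 hιc) (c * ε / 4) (by positivity)
    refine ⟨max N₁ N₂, fun m hm n hn => ?_⟩
    have hm1 := hN₁ m (le_trans (le_max_left _ _) hm)
    have hn1 := hN₁ n (le_trans (le_max_left _ _) hn)
    have h2 := hN₂ m (le_trans (le_max_right _ _) hm) n (le_trans (le_max_right _ _) hn)
    rw [Real.dist_eq, sub_zero, abs_of_nonneg (norm_nonneg _)] at hm1 hn1
    rw [dist_eq_norm] at h2 ⊢
    have hest2 := hest t₀ (v (φ m) - v (φ n))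
    have h4 : ‖T t₀ (v (φ m) - v (φ n))‖ ≤ ‖T t₀ (v (φ m))‖ + ‖T t₀ (v (φ n))‖ := by
      rw [map_sub]; exact norm_sub_le _ _
    have h5 : ‖ι (v (φ m) - v (φ n))‖ = ‖ι (v (φ m)) - ι (v (φ n))‖ := by rw [map_sub]
    have : c * ‖v (φ m) - v (φ n)‖ < c * ε := by
      rw [h5] at hest2
      nlinarith
    exact lt_of_mul_lt_mul_left this hc.le
  obtain ⟨vlim, hvlim⟩ := cauchySeq_tendsto_of_complete hcauchy
  have hnorm1 : ‖vlim‖ = 1 := by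
    have h := hvlim.norm
    simp only [hv1] at h
    exact tendsto_nhds_unique h tendsto_const_nhds
  have hker : vlim ∈ LinearMap.ker (T t₀ : H₁ →ₗ[ℂ] K) := by
    have h1 : Filter.Tendsto (fun n => T t₀ (v (φ n))) Filter.atTop (nhds (T t₀ vlim)) :=
      ((T t₀).continuous.tendsto _).comp hvlim
    have h2 : Filter.Tendsto (fun n => T t₀ (v (φ n))) Filter.atTop (nhds 0) := by
      rw [tendsto_zero_iff_norm_tendsto_zero]; exact hT0
    exact LinearMap.mem_ker.2 (tendsto_nhds_unique h1 h2)
  have hι0 : ι vlim = 0 := by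
    have h1 : Filter.Tendsto (fun n => ⟪ι (v (φ n)), ι vlim⟫_ℂ) Filter.atTop
        (nhds ⟪ι vlim, ι vlim⟫_ℂ) := by
      have hιv : Filter.Tendsto (fun n => ι (v (φ n))) Filter.atTop (nhds (ι vlim)) :=
        (ι.continuous.tendsto _).comp hvlim
      exact Filter.Tendsto.inner hιv tendsto_const_nhds
    have h2 : (fun n => ⟪ι (v (φ n)), ι vlim⟫_ℂ) = fun _ => (0 : ℂ) := by
      funext n; exact horthv (φ n) vlim hker
    rw [h2] at h1
    have h3 : ⟪ι vlim, ι vlim⟫_ℂ = 0 := (tendsto_nhds_unique h1 tendsto_const_nhds).symm.symm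
    exact inner_self_eq_zero.1 h3
  have : vlim = 0 := hinj (by simp [hι0])
  rw [this, norm_zero] at hnorm1
  norm_num at hnorm1
end

section
/- Under the hypotheses of the previous statement, there exist ε > 0 such that for all t with dist(t, t₀) < ε, the kernel of T_t intersects the H₀-orthogonal complement of N₀ = ker T_{t₀} trivially; consequently dim ker T_t ≤ dim ker T_{t₀}. -/
open scoped InnerProductSpace
open Filter Topology Metric

/-- Upper semicontinuity of the kernel dimension under deformation: under the
hypotheses of the uniform subelliptic estimate, for `t` close to `t₀` the kernel of
`T t` meets the `H₀`-orthogonal complement of `N₀ = ker (T t₀)` trivially, so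
`dim ker (T t) ≤ dim ker (T t₀)`. -/
theorem stmt9 {H₀ H₁ K : Type*}
    [NormedAddCommGroup H₀] [InnerProductSpace ℂ H₀] [CompleteSpace H₀]
    [NormedAddCommGroup H₁] [InnerProductSpace ℂ H₁] [CompleteSpace H₁]
    [NormedAddCommGroup K] [InnerProductSpace ℂ K] [CompleteSpace K]
    {I : Type*} [MetricSpace I]
    (ι : H₁ →L[ℂ] H₀) (hcomp : IsCompactOperator ι) (hinj : Function.Injective ι)
    (T : I → (H₁ →L[ℂ] K)) (hTcont : Continuous T)
    (c : ℝ) (hc : 0 < c)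
    (hest : ∀ (t : I) (u : H₁), c * ‖u‖ ≤ ‖T t u‖ + ‖ι u‖)
    (t₀ : I) :
    ∃ ε > (0 : ℝ), ∀ t : I, dist t t₀ < ε →
      (∀ u ∈ LinearMap.ker (T t : H₁ →ₗ[ℂ] K),
        (∀ w ∈ LinearMap.ker (T t₀ : H₁ →ₗ[ℂ] K), ⟪ι u, ι w⟫_ℂ = 0) → u = 0) ∧
      Module.finrank ℂ (LinearMap.ker (T t : H₁ →ₗ[ℂ] K)) ≤
        Module.finrank ℂ (LinearMap.ker (T t₀ : H₁ →ₗ[ℂ] K)) := by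
  -- Step 1: subsequence extraction from compactness of ι
  have hsubseq : ∀ v : ℕ → H₁, (∀ n, ‖v n‖ ≤ 1) → ∃ φ : ℕ → ℕ, StrictMono φ ∧
      CauchySeq (fun n => ι (v (φ n))) := by
    intro v hv
    obtain ⟨Kc, hKc, hKsub⟩ :=
      IsCompactOperator.image_closedBall_subset_compact (f := (ι : H₁ →ₗ[ℂ] H₀)) hcomp 2
    have hmem : ∀ n, ι (v n) ∈ Kc := by
      intro n
      exact hKsub ⟨v n, by
        simp only [Metric.mem_closedBall, dist_zero_right]
        linarith [hv n], rfl⟩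
    obtain ⟨y, _, φ, hφ, hconv⟩ := hKc.tendsto_subseq hmem
    exact ⟨φ, hφ, hconv.cauchySeq⟩
  -- Step 2: Cauchy upgrade
  have hcauchy : ∀ v : ℕ → H₁, Tendsto (fun n => ‖T t₀ (v n)‖) atTop (𝓝 0) →
      CauchySeq (fun n => ι (v n)) → CauchySeq v := by
    intro v hT hι
    rw [Metric.cauchySeq_iff]
    intro ε hε
    rw [Metric.cauchySeq_iff] at hι
    obtain ⟨N₁, hN₁⟩ := hι (c * ε / 4) (by positivity)
    have hT' := (Metric.tendsto_atTop.mp hT) (c * ε / 4) (by positivity)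
    obtain ⟨N₂, hN₂⟩ := hT'
    refine ⟨max N₁ N₂, fun m hm n hn => ?_⟩
    have h1 := hN₁ m (le_trans (le_max_left _ _) hm) n (le_trans (le_max_left _ _) hn)
    have h2 := hN₂ m (le_trans (le_max_right _ _) hm)
    have h3 := hN₂ n (le_trans (le_max_right _ _) hn)
    rw [Real.dist_eq] at h2 h3
    have h2' : ‖T t₀ (v m)‖ < c * ε / 4 := by
      have := abs_lt.mp h2; simpa using this.2
    have h3' : ‖T t₀ (v n)‖ < c * ε / 4 := by
      have := abs_lt.mp h3; simpa using this.2
    have key := hest t₀ (v m - v n)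
    have hd : dist (v m) (v n) = ‖v m - v n‖ := dist_eq_norm _ _
    have hTd : ‖T t₀ (v m - v n)‖ ≤ ‖T t₀ (v m)‖ + ‖T t₀ (v n)‖ := by
      rw [map_sub]; exact norm_sub_le _ _
    have hιd : ‖ι (v m - v n)‖ < c * ε / 4 := by
      rw [map_sub, ← dist_eq_norm]; exact h1
    rw [hd]
    nlinarith [norm_nonneg (v m - v n)]
  -- Step 3: finite-dimensionality of ker (T t₀)
  have hclosed : IsClosed ((LinearMap.ker (T t₀ : H₁ →ₗ[ℂ] K) : Submodule ℂ H₁) : Set H₁) :=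
    ContinuousLinearMap.isClosed_ker (T t₀)
  haveI hfd : FiniteDimensional ℂ (LinearMap.ker (T t₀ : H₁ →ₗ[ℂ] K)) := by
    apply FiniteDimensional.of_isCompact_closedBall₀ ℂ one_pos (r := 1)
    apply IsSeqCompact.isCompact
    intro x hx
    set v : ℕ → H₁ := fun n => (x n : H₁) with hv
    have hv1 : ∀ n, ‖v n‖ ≤ 1 := by
      intro n
      have := hx n
      simp only [Metric.mem_closedBall, dist_zero_right] at this
      simpa using this
    obtain ⟨φ, hφ, hCι⟩ := hsubseq v hv1
    have hT0 : Tendsto (fun n => ‖T t₀ (v (φ n))‖) atTop (𝓝 0) := by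
      have : ∀ n, ‖T t₀ (v (φ n))‖ = 0 := fun n => by
        have := (x (φ n)).2
        simp only [LinearMap.mem_ker] at this
        simp [v, this]
      simpa [this] using tendsto_const_nhds (α := ℝ) (x := (0:ℝ)) (f := atTop (α := ℕ))
    have hC : CauchySeq (fun n => v (φ n)) := hcauchy _ hT0 hCι
    obtain ⟨u, hu⟩ := cauchySeq_tendsto_of_complete hC
    have humem : u ∈ LinearMap.ker (T t₀ : H₁ →ₗ[ℂ] K) := by
      apply hclosed.mem_of_tendsto hu
      exact Filter.Eventually.of_forall fun n => (x (φ n)).2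
    have hnorm : ‖u‖ ≤ 1 := by
      have := (continuous_norm.tendsto u).comp hu
      exact le_of_tendsto this (Filter.Eventually.of_forall fun n => hv1 (φ n))
    refine ⟨⟨u, humem⟩, ?_, φ, hφ, ?_⟩
    · simpa [Metric.mem_closedBall, dist_zero_right] using hnorm
    · rw [tendsto_subtype_rng]
      exact hu
  -- Step 4: the coercive estimate on the orthogonal complement
  have hest' : ∃ c' > (0:ℝ), ∀ u : H₁,
      (∀ w ∈ LinearMap.ker (T t₀ : H₁ →ₗ[ℂ] K), ⟪ι u, ι w⟫_ℂ = 0) → c' * ‖u‖ ≤ ‖T t₀ u‖ := by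
    by_contra h
    push_neg at h
    have hseq : ∀ n : ℕ, ∃ v : H₁, (∀ w ∈ LinearMap.ker (T t₀ : H₁ →ₗ[ℂ] K), ⟪ι v, ι w⟫_ℂ = 0) ∧
        ‖v‖ = 1 ∧ ‖T t₀ v‖ < 1 / (n + 1) := by
      intro n
      obtain ⟨u, hu1, hu2⟩ := h (1 / (n + 1)) (by positivity)
      have hune : u ≠ 0 := by
        intro h0
        rw [h0] at hu2
        simp at hu2
      have hnu : (0:ℝ) < ‖u‖ := norm_pos_iff.mpr hune
      refine ⟨((‖u‖ : ℂ))⁻¹ • u, ?_, ?_, ?_⟩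
      · intro w hw
        rw [map_smul, inner_smul_left, hu1 w hw, mul_zero]
      · rw [norm_smul]
        simp [norm_inv, hnu.ne']
      · rw [map_smul, norm_smul]
        simp only [norm_inv, Complex.norm_real, Real.norm_eq_abs, abs_of_pos hnu]
        rw [inv_mul_lt_iff₀ hnu, mul_comm]
        exact hu2
    choose v hvorth hvnorm hvT using hseq
    obtain ⟨φ, hφ, hCι⟩ := hsubseq v (fun n => (hvnorm n).le)
    have hT0 : Tendsto (fun n => ‖T t₀ (v (φ n))‖) atTop (𝓝 0) := by
      apply squeeze_zero (fun n => norm_nonneg _) (fun n => (hvT (φ n)).le.trans ?_)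
      · exact tendsto_one_div_add_atTop_nhds_zero_nat
      · have hle : n ≤ φ n := hφ.le_apply
        have h2 : (n:ℝ) + 1 ≤ (φ n : ℝ) + 1 := by exact_mod_cast Nat.succ_le_succ hle
        apply one_div_le_one_div_of_le (by positivity) h2
    have hC : CauchySeq (fun n => v (φ n)) := hcauchy _ hT0 hCι
    obtain ⟨u, hu⟩ := cauchySeq_tendsto_of_complete hC
    have hunorm : ‖u‖ = 1 := by
      have := (continuous_norm.tendsto u).comp hu
      have heq : Tendsto (fun n => ‖v (φ n)‖) atTop (𝓝 1) := by
        simpa [hvnorm] using tendsto_const_nhds (α := ℝ) (x := 1) (f := atTop (α := ℕ))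
      have := tendsto_nhds_unique ((continuous_norm.tendsto u).comp hu) heq
      exact this
    have huker : u ∈ LinearMap.ker (T t₀ : H₁ →ₗ[ℂ] K) := by
      have h1 : Tendsto (fun n => ‖T t₀ (v (φ n))‖) atTop (𝓝 ‖T t₀ u‖) :=
        (continuous_norm.tendsto _).comp (((T t₀).continuous.tendsto u).comp hu)
      have h2 : ‖T t₀ u‖ = 0 := tendsto_nhds_unique h1 hT0
      simpa [LinearMap.mem_ker] using norm_eq_zero.mp h2
    have huorth : ∀ w ∈ LinearMap.ker (T t₀ : H₁ →ₗ[ℂ] K), ⟪ι u, ι w⟫_ℂ = 0 := by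
      intro w hw
      have hcont : Tendsto (fun n => ⟪ι (v (φ n)), ι w⟫_ℂ) atTop (𝓝 ⟪ι u, ι w⟫_ℂ) := by
        apply Tendsto.inner
        · exact (ι.continuous.tendsto u).comp hu
        · exact tendsto_const_nhds
      have : Tendsto (fun _ : ℕ => (0:ℂ)) atTop (𝓝 ⟪ι u, ι w⟫_ℂ) := by
        simpa [fun n => hvorth (φ n) w hw] using hcont
      exact tendsto_nhds_unique this tendsto_const_nhds
    have : ⟪ι u, ι u⟫_ℂ = 0 := huorth u huker
    have : ι u = 0 := inner_self_eq_zero.mp this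
    have : u = 0 := hinj (by simpa using this)
    rw [this] at hunorm
    simp at hunorm
  obtain ⟨c', hc', hkey⟩ := hest'
  -- Step 5: continuity of T at t₀
  have hTat : ∃ ε > (0:ℝ), ∀ t : I, dist t t₀ < ε → ‖T t - T t₀‖ < c' / 2 := by
    have := Metric.continuousAt_iff.mp (hTcont.continuousAt (x := t₀))
    obtain ⟨δ, hδ, hδ'⟩ := this (c' / 2) (by positivity)
    exact ⟨δ, hδ, fun t ht => by
      have := hδ' ht
      rwa [dist_eq_norm] at this⟩
  obtain ⟨ε, hε, hεkey⟩ := hTat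
  refine ⟨ε, hε, fun t ht => ?_⟩
  have part1 : ∀ u ∈ LinearMap.ker (T t : H₁ →ₗ[ℂ] K),
      (∀ w ∈ LinearMap.ker (T t₀ : H₁ →ₗ[ℂ] K), ⟪ι u, ι w⟫_ℂ = 0) → u = 0 := by
    intro u hu horth
    have h1 : c' * ‖u‖ ≤ ‖T t₀ u‖ := hkey u horth
    have h2 : T t u = 0 := hu
    have h3 : ‖T t₀ u‖ = ‖(T t₀ - T t) u‖ := by
      rw [ContinuousLinearMap.sub_apply, h2, sub_zero]
    have h4 : ‖(T t₀ - T t) u‖ ≤ ‖T t₀ - T t‖ * ‖u‖ := (T t₀ - T t).le_opNorm u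
    have h5 : ‖T t₀ - T t‖ < c' / 2 := by
      rw [norm_sub_rev]; exact hεkey t ht
    have h6 : c' * ‖u‖ ≤ (c'/2) * ‖u‖ := by
      calc c' * ‖u‖ ≤ ‖T t₀ u‖ := h1
      _ = ‖(T t₀ - T t) u‖ := h3
      _ ≤ ‖T t₀ - T t‖ * ‖u‖ := h4
      _ ≤ (c'/2) * ‖u‖ := by nlinarith [norm_nonneg u]
    have : ‖u‖ = 0 := by nlinarith [norm_nonneg u]
    exact norm_eq_zero.mp this
  refine ⟨part1, ?_⟩
  -- Step 6: dimension count via orthogonal projection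
  set N₀ := LinearMap.ker (T t₀ : H₁ →ₗ[ℂ] K) with hN₀
  set W : Submodule ℂ H₀ := N₀.map (ι : H₁ →ₗ[ℂ] H₀) with hW
  haveI : FiniteDimensional ℂ W := Module.Finite.map _ _
  let f : (LinearMap.ker (T t : H₁ →ₗ[ℂ] K)) →ₗ[ℂ] W :=
    (W.orthogonalProjectionOnto).toLinearMap ∘ₗ
      ((ι : H₁ →ₗ[ℂ] H₀) ∘ₗ (LinearMap.ker (T t : H₁ →ₗ[ℂ] K)).subtype)
  have hfinj : Function.Injective f := by
    rw [injective_iff_map_eq_zero]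
    intro x hx
    have hxorth : (ι x : H₀) ∈ Wᗮ := by
      rw [← Submodule.orthogonalProjectionOnto_eq_zero_iff]
      exact hx
    have horth : ∀ w ∈ N₀, ⟪ι (x : H₁), ι w⟫_ℂ = 0 := by
      intro w hw
      rw [inner_eq_zero_symm]
      exact (Submodule.mem_orthogonal W _).mp hxorth (ι w) ⟨w, hw, rfl⟩
    have := part1 x x.2 horth
    exact Subtype.ext this
  have h1 : Module.finrank ℂ (LinearMap.ker (T t : H₁ →ₗ[ℂ] K)) ≤ Module.finrank ℂ W :=
    LinearMap.finrank_le_finrank_of_injective hfinj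
  have h2 : Module.finrank ℂ W = Module.finrank ℂ N₀ := by
    have e := Submodule.equivMapOfInjective (ι : H₁ →ₗ[ℂ] H₀) hinj N₀
    exact e.finrank_eq.symm
  rw [h2] at h1
  exact h1
end
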